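/- Let n be a positive integer. For every δ > 0 there exists ρ > 0 such that whenever D is a C*-algebra and b₁, …, bₙ ∈ D satisfy 0 ≤ bⱼ ≤ 1 and ‖bⱼ b_k‖ < ρ for all j ≠ k, then there exist y₁, …, yₙ ∈ D with 0 ≤ yⱼ ≤ 1, yⱼ y_k = 0 for j ≠ k, and ‖yⱼ - bⱼ‖ < δ for all j. -/

import Mathlib

open Finset in
private lemma aos_poly_approx (f : ℝ → ℝ) (hf : Continuous f) (hf0 : f 0 = 0)
    (R ε : ℝ) (hε : 0 < ε) :
    ∃ (N : ℕ) (c : ℕ → ℝ), ∀ t ∈ Set.Icc (0:ℝ) R,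
      |f t - ∑ i ∈ range N, c i * t ^ (i+1)| < ε := by
  by_cases hR : (0:ℝ) ≤ R
  · obtain ⟨p, hp⟩ := exists_polynomial_near_of_continuousOn 0 R f
      hf.continuousOn (ε/2) (by linarith)
    have h0 : |p.eval 0| < ε/2 := by simpa [hf0] using hp 0 ⟨le_refl 0, hR⟩
    set q : Polynomial ℝ := p - Polynomial.C (p.eval 0) with hqdef
    have hq0 : q.coeff 0 = 0 := by
      simp [hqdef, Polynomial.coeff_sub, ← Polynomial.coeff_zero_eq_eval_zero]
    refine ⟨q.natDegree, fun i => q.coeff (i+1), fun t ht => ?_⟩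
    have heval : q.eval t = ∑ i ∈ range q.natDegree, q.coeff (i+1) * t^(i+1) := by
      conv_lhs => rw [Polynomial.eval_eq_sum_range, Finset.sum_range_succ']
      simp [hq0]
    rw [← heval]
    have h1 := hp t ht
    have h2 : f t - q.eval t = (f t - p.eval t) + p.eval 0 := by
      simp [hqdef]; ring
    rw [h2]
    calc |(f t - p.eval t) + p.eval 0| ≤ |f t - p.eval t| + |p.eval 0| := abs_add_le _ _
      _ < ε/2 + ε/2 := by rw [abs_sub_comm]; exact add_lt_add h1 h0
      _ = ε := by ring
  · exact ⟨0, fun _ => 0, fun t ht => absurd (ht.1.trans ht.2) hR⟩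

section Helpers

variable {D : Type*} [NonUnitalCStarAlgebra D]

/-- `aosPw a i = a^(i+1)` in a non-unital algebra. -/
private def aosPw (a : D) : ℕ → D
  | 0 => a
  | (i+1) => a * aosPw a i

private lemma aos_cfcn_pow (a : D) (ha : IsSelfAdjoint a) (i : ℕ) :
    cfcₙ (fun t : ℝ => t ^ (i+1)) a = aosPw a i := by
  induction i with
  | zero => simpa [aosPw] using cfcₙ_id' ℝ a
  | succ n ih =>
    have h : (fun t : ℝ => t ^ (n+1+1)) = fun t : ℝ => t * t ^ (n+1) := by
      ext t; ring
    rw [h, cfcₙ_mul _ _ a (by fun_prop) rfl (by fun_prop) (by simp), ih, cfcₙ_id' ℝ a]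
    rfl

open Finset in
private lemma aos_cfcn_polysum (a : D) (ha : IsSelfAdjoint a) (N : ℕ) (c : ℕ → ℝ) :
    cfcₙ (fun t : ℝ => ∑ i ∈ range N, c i * t ^ (i+1)) a
      = ∑ i ∈ range N, c i • aosPw a i := by
  have h1 : (fun t : ℝ => ∑ i ∈ range N, c i * t ^ (i+1))
      = ∑ i ∈ range N, (fun t : ℝ => c i * t ^ (i+1)) := by
    ext t; simp
  rw [h1, cfcₙ_sum _ a _ (fun i _ => by fun_prop) (fun i _ => by simp)]
  refine Finset.sum_congr rfl fun i _ => ?_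
  rw [cfcₙ_const_mul _ _ a (by fun_prop) (by simp), aos_cfcn_pow a ha i]

end Helpers

section Engine

variable {D : Type*} [NonUnitalCStarAlgebra D] [PartialOrder D] [StarOrderedRing D]

private lemma aos_quasispec_Icc {a : D} (ha : 0 ≤ a) {x : ℝ}
    (hx : x ∈ quasispectrum ℝ a) : x ∈ Set.Icc 0 ‖a‖ := by
  have hsa : IsSelfAdjoint a := ha.isSelfAdjoint
  refine ⟨(StarOrderedRing.nonneg_iff_quasispectrum_nonneg a hsa).mp ha x hx, ?_⟩
  calc x ≤ |x| := le_abs_self x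
    _ = ‖(id x : ℝ)‖ := by simp
    _ ≤ ‖cfcₙ (id : ℝ → ℝ) a‖ := norm_apply_le_norm_cfcₙ id a hx (by fun_prop) rfl hsa
    _ = ‖a‖ := by rw [cfcₙ_id ℝ a]

private lemma aos_engine (q y z : D) (hq : 0 ≤ q) (hy : 0 ≤ y)
    (f : ℝ → ℝ) (hf : Continuous f) (hf0 : f 0 = 0)
    (hpow : ∀ i : ℕ, aosPw q i * z = aosPw y i * z) :
    cfcₙ f q * z = cfcₙ f y * z := by
  have hsq : IsSelfAdjoint q := hq.isSelfAdjoint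
  have hsy : IsSelfAdjoint y := hy.isSelfAdjoint
  have key : ∀ ε : ℝ, 0 < ε → ‖cfcₙ f q * z - cfcₙ f y * z‖ ≤ ε * (2 * ‖z‖) := by
    intro ε hε
    obtain ⟨N, c, hc⟩ := aos_poly_approx f hf hf0 (max ‖q‖ ‖y‖) ε hε
    set P : ℝ → ℝ := fun t => ∑ i ∈ Finset.range N, c i * t ^ (i+1) with hP
    have hPc : Continuous P := by fun_prop
    have hP0 : P 0 = 0 := by simp [hP]
    have hmid : cfcₙ P q * z = cfcₙ P y * z := by
      rw [hP, aos_cfcn_polysum q hsq N c, aos_cfcn_polysum y hsy N c,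
          Finset.sum_mul, Finset.sum_mul]
      exact Finset.sum_congr rfl fun i _ => by
        rw [smul_mul_assoc, smul_mul_assoc, hpow i]
    have hq' : ‖cfcₙ f q - cfcₙ P q‖ ≤ ε := by
      rw [← cfcₙ_sub f P q hf.continuousOn hf0 hPc.continuousOn hP0]
      refine norm_cfcₙ_le fun x hx => ?_
      have hxI := aos_quasispec_Icc hq hx
      exact le_of_lt (by
        simpa [Real.norm_eq_abs] using
          hc x ⟨hxI.1, hxI.2.trans (le_max_left _ _)⟩)
    have hy' : ‖cfcₙ f y - cfcₙ P y‖ ≤ ε := by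
      rw [← cfcₙ_sub f P y hf.continuousOn hf0 hPc.continuousOn hP0]
      refine norm_cfcₙ_le fun x hx => ?_
      have hxI := aos_quasispec_Icc hy hx
      exact le_of_lt (by
        simpa [Real.norm_eq_abs] using
          hc x ⟨hxI.1, hxI.2.trans (le_max_right _ _)⟩)
    calc ‖cfcₙ f q * z - cfcₙ f y * z‖
        = ‖(cfcₙ f q - cfcₙ P q) * z - (cfcₙ f y - cfcₙ P y) * z‖ := by
          rw [sub_mul, sub_mul]
          congr 1
          rw [hmid]
          abel
      _ ≤ ‖(cfcₙ f q - cfcₙ P q) * z‖ + ‖(cfcₙ f y - cfcₙ P y) * z‖ := norm_sub_le _ _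
      _ ≤ ε * ‖z‖ + ε * ‖z‖ := by
          gcongr
          · exact (norm_mul_le _ _).trans (by gcongr)
          · exact (norm_mul_le _ _).trans (by gcongr)
      _ = ε * (2 * ‖z‖) := by ring
  rw [← sub_eq_zero]
  by_contra hne
  have hpos : 0 < ‖cfcₙ f q * z - cfcₙ f y * z‖ := norm_pos_iff.mpr hne
  have hεpos : 0 < ‖cfcₙ f q * z - cfcₙ f y * z‖ / (2 * ‖z‖ + 1) := by positivity
  have h1 := key _ hεpos
  have h2 : ‖cfcₙ f q * z - cfcₙ f y * z‖ / (2 * ‖z‖ + 1) * (2 * ‖z‖)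
      < ‖cfcₙ f q * z - cfcₙ f y * z‖ := by
    rw [div_mul_eq_mul_div, div_lt_iff₀ (by positivity)]
    nlinarith [norm_nonneg z]
  linarith

private lemma aos_engine0 (q z : D) (hq : 0 ≤ q)
    (f : ℝ → ℝ) (hf : Continuous f) (hf0 : f 0 = 0)
    (hpow : ∀ i : ℕ, aosPw q i * z = 0) :
    cfcₙ f q * z = 0 := by
  have h := aos_engine q 0 z hq le_rfl f hf hf0 (fun i => by
    rw [hpow i]
    induction i with
    | zero => simp [aosPw]
    | succ n ih => simp [aosPw])
  rw [h]
  have h0 : cfcₙ f (0 : D) = 0 := by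
    have he : cfcₙ f (0 : D) = cfcₙ (fun _ : ℝ => (0:ℝ)) (0 : D) := by
      refine cfcₙ_congr ?_
      rw [CFC.quasispectrum_zero_eq]
      intro x hx
      simp only [Set.mem_singleton_iff] at hx
      simp [hx, hf0]
    rw [he, cfcₙ_const_zero]
  rw [h0, zero_mul]

end Engine

section Funcs

private noncomputable def mfn (η : ℝ) : ℝ → ℝ := fun t => t / max t η
private noncomputable def gfn (η : ℝ) : ℝ → ℝ := fun t => max (t - η) 0
private noncomputable def kfn (η : ℝ) : ℝ → ℝ := fun t => max (t - η) 0 / max t η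

variable {η : ℝ} (hη : 0 < η)

include hη

private lemma aos_maxpos : ∀ t : ℝ, 0 < max t η := fun t => lt_of_lt_of_le hη (le_max_right t η)

private lemma mfn_cont : Continuous (mfn η) :=
  continuous_id.div (continuous_id.max continuous_const) fun t => (aos_maxpos hη t).ne'

private lemma kfn_cont : Continuous (kfn η) :=
  (((continuous_id.sub continuous_const).max continuous_const).div
    (continuous_id.max continuous_const)) fun t => (aos_maxpos hη t).ne'

private lemma gfn_cont : Continuous (gfn η) :=
  (continuous_id.sub continuous_const).max continuous_const

private lemma mfn_zero : mfn η 0 = 0 := by simp [mfn]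

private lemma gfn_zero : gfn η 0 = 0 := by
  simp only [gfn, zero_sub]
  exact max_eq_right (by linarith)

private lemma kfn_zero : kfn η 0 = 0 := by
  simp only [kfn, zero_sub]
  rw [max_eq_right (by linarith), zero_div]

private lemma gfn_eq_mul : ∀ t, gfn η t = t * kfn η t := by
  intro t
  by_cases ht : t ≤ η
  · have h1 : t - η ≤ 0 := by linarith
    simp only [gfn, kfn, max_eq_right h1, zero_div, mul_zero]
  · push_neg at ht
    have htpos : (0:ℝ) < t := hη.trans ht
    have h1 : (0:ℝ) ≤ t - η := by linarith
    simp only [gfn, kfn, max_eq_left h1, max_eq_left ht.le]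
    field_simp

private lemma mfn_mul_gfn : ∀ t, mfn η t * gfn η t = gfn η t := by
  intro t
  by_cases ht : t ≤ η
  · have h1 : t - η ≤ 0 := by linarith
    simp only [gfn, max_eq_right h1, mul_zero]
  · push_neg at ht
    have htpos : (0:ℝ) < t := hη.trans ht
    simp only [mfn, max_eq_left ht.le, div_self htpos.ne']
    rw [one_mul]

private lemma mfn_nonneg {t : ℝ} (ht : 0 ≤ t) : 0 ≤ mfn η t :=
  div_nonneg ht (aos_maxpos hη t).le

private lemma mfn_le_one (t : ℝ) : mfn η t ≤ 1 := by
  rw [mfn, div_le_one (aos_maxpos hη t)]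
  exact le_max_left t η

private lemma mfn_le {t : ℝ} (ht : 0 ≤ t) : mfn η t ≤ η⁻¹ * t := by
  rw [mfn, ← div_eq_inv_mul]
  exact div_le_div_of_nonneg_left ht hη (le_max_right t η) |>.trans le_rfl
    |>.trans (le_of_eq rfl) |>.trans le_rfl

private lemma gfn_nonneg (t : ℝ) : 0 ≤ gfn η t := le_max_right _ _

private lemma gfn_le_one {t : ℝ} (ht1 : t ≤ 1) : gfn η t ≤ 1 :=
  max_le (by linarith) zero_le_one

private lemma gfn_sub_id {t : ℝ} (ht : 0 ≤ t) : |gfn η t - t| ≤ η := by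
  by_cases h : t ≤ η
  · rw [gfn, max_eq_right (by linarith), zero_sub, abs_neg, abs_of_nonneg ht]
    exact h
  · push_neg at h
    rw [gfn, max_eq_left (by linarith)]
    simp [abs_of_nonpos, hη.le]

end Funcs

set_option maxHeartbeats 1600000 in
private lemma aos_main : ∀ (n : ℕ) (δ : ℝ), 0 < δ →
    ∃ ρ : ℝ, 0 < ρ ∧
      ∀ (D : Type u) [NonUnitalCStarAlgebra D] [PartialOrder D] [StarOrderedRing D],
        ∀ b : Fin n → D, (∀ j, 0 ≤ b j) → (∀ j, ‖b j‖ ≤ 1) →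
          (∀ j k, j ≠ k → ‖b j * b k‖ < ρ) →
          ∃ y : Fin n → D, (∀ j, 0 ≤ y j) ∧ (∀ j, ‖y j‖ ≤ 1) ∧
            (∀ j k, j ≠ k → y j * y k = 0) ∧ (∀ j, ‖y j - b j‖ < δ) := by
  intro n
  induction n with
  | zero =>
    intro δ hδ
    exact ⟨1, one_pos, fun D _ _ _ b _ _ _ =>
      ⟨b, fun j => j.elim0, fun j => j.elim0, fun j => j.elim0, fun j => j.elim0⟩⟩
  | succ n ih =>
    intro δ hδ
    set η : ℝ := δ/4 with hηdef
    have hη : 0 < η := by positivity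
    set ε₀ : ℝ := δ^2/(26*(n+1)) with hε₀def
    have hε₀ : 0 < ε₀ := by positivity
    set δ' : ℝ := min (δ/4) ε₀ with hδ'def
    have hδ'pos : 0 < δ' := lt_min (by positivity) hε₀
    obtain ⟨ρ', hρ', IH⟩ := ih δ' hδ'pos
    refine ⟨min ρ' ε₀, lt_min hρ' hε₀, ?_⟩
    intro D _ _ _ b hb0 hb1 hbρ
    obtain ⟨y', hy'0, hy'1, hy'orth, hy'close⟩ := IH D (fun j => b j.castSucc)
      (fun j => hb0 _) (fun j => hb1 _)
      (fun j k hjk => lt_of_lt_of_le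
        (hbρ _ _ (by simpa [Fin.castSucc_inj] using hjk)) (min_le_left _ _))
    have hy'sa : ∀ j, IsSelfAdjoint (y' j) := fun j => (hy'0 j).isSelfAdjoint
    -- the shrunken elements
    set z : Fin n → D := fun j => cfcₙ (gfn η) (y' j) with hzdef
    have hzfact : ∀ j, z j = y' j * cfcₙ (kfn η) (y' j) := by
      intro j
      show cfcₙ (gfn η) (y' j) = _
      have h1 : gfn η = fun t => t * kfn η t := funext (gfn_eq_mul hη)
      rw [h1, cfcₙ_mul (fun t => t) (kfn η) (y' j) (by fun_prop) rfl
        (kfn_cont hη).continuousOn (kfn_zero hη), cfcₙ_id' ℝ (y' j)]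
    have hz0 : ∀ j, 0 ≤ z j := fun j => cfcₙ_nonneg fun x _ => gfn_nonneg hη x
    have hzsa : ∀ j, IsSelfAdjoint (z j) := fun j => (hz0 j).isSelfAdjoint
    have hz1 : ∀ j, ‖z j‖ ≤ 1 := by
      intro j
      refine norm_cfcₙ_le fun x hx => ?_
      have hxI := aos_quasispec_Icc (hy'0 j) hx
      rw [Real.norm_eq_abs, abs_of_nonneg (gfn_nonneg hη x)]
      exact gfn_le_one hη (hxI.2.trans (hy'1 j))
    have hzy : ∀ j, ‖z j - y' j‖ ≤ η := by
      intro j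
      have h1 : z j - y' j = cfcₙ (fun t => gfn η t - t) (y' j) := by
        show cfcₙ (gfn η) (y' j) - y' j = _
        rw [cfcₙ_sub (gfn η) (fun t => t) (y' j) (gfn_cont hη).continuousOn (gfn_zero hη)
          (by fun_prop) rfl, cfcₙ_id' ℝ (y' j)]
      rw [h1]
      refine norm_cfcₙ_le fun x hx => ?_
      have hxI := aos_quasispec_Icc (hy'0 j) hx
      rw [Real.norm_eq_abs]
      exact gfn_sub_id hη hxI.1
    -- sum of old elements
    set q : D := ∑ j, y' j with hqdef
    have hq0 : 0 ≤ q := Finset.sum_nonneg fun j _ => hy'0 j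
    have hqsa : IsSelfAdjoint q := hq0.isSelfAdjoint
    -- annihilation of z j by other y's
    have hann : ∀ j l, l ≠ j → y' l * z j = 0 := by
      intro j l hlj
      rw [hzfact j, ← mul_assoc, hy'orth l j hlj, zero_mul]
    have hyz : ∀ j, q * z j = y' j * z j := by
      intro j
      rw [hqdef, Finset.sum_mul]
      rw [Finset.sum_eq_single j (fun l _ hlj => hann j l hlj) (by simp)]
    have hannpw : ∀ j l (i : ℕ), l ≠ j → y' l * (aosPw (y' j) i * z j) = 0 := by
      intro j l i hlj
      cases i with
      | zero => rw [show aosPw (y' j) 0 = y' j from rfl, ← mul_assoc, hy'orth l j hlj, zero_mul]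
      | succ m =>
        rw [show aosPw (y' j) (m+1) = y' j * aosPw (y' j) m from rfl]
        rw [mul_assoc, ← mul_assoc (y' l), hy'orth l j hlj, zero_mul]
    have hpwqz : ∀ j (i : ℕ), aosPw q i * z j = aosPw (y' j) i * z j := by
      intro j i
      induction i with
      | zero => exact hyz j
      | succ m ihm =>
        rw [show aosPw q (m+1) = q * aosPw q m from rfl, mul_assoc, ihm, hqdef,
          Finset.sum_mul]
        rw [Finset.sum_eq_single j (fun l _ hlj => hannpw j l m hlj) (by simp)]
        rw [show aosPw (y' j) (m+1) = y' j * aosPw (y' j) m from rfl, mul_assoc]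
    -- the cutting element
    set c : D := cfcₙ (mfn η) q with hcdef
    have hc0 : 0 ≤ c := cfcₙ_nonneg fun x hx =>
      mfn_nonneg hη (aos_quasispec_Icc hq0 hx).1
    have hcsa : IsSelfAdjoint c := hc0.isSelfAdjoint
    have hcn : ‖c‖ ≤ 1 := norm_cfcₙ_le fun x hx => by
      rw [Real.norm_eq_abs, abs_of_nonneg (mfn_nonneg hη (aos_quasispec_Icc hq0 hx).1)]
      exact mfn_le_one hη x
    have hcz : ∀ j, c * z j = z j := by
      intro j
      have h1 : c * z j = cfcₙ (mfn η) (y' j) * z j :=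
        aos_engine q (y' j) (z j) hq0 (hy'0 j) (mfn η) (mfn_cont hη) (mfn_zero hη) (hpwqz j)
      have h2 : cfcₙ (mfn η) (y' j) * cfcₙ (gfn η) (y' j)
          = cfcₙ (fun t => mfn η t * gfn η t) (y' j) :=
        (cfcₙ_mul (mfn η) (gfn η) (y' j) (mfn_cont hη).continuousOn (mfn_zero hη)
          (gfn_cont hη).continuousOn (gfn_zero hη)).symm
      have h3 : (fun t => mfn η t * gfn η t) = gfn η := funext (mfn_mul_gfn hη)
      rw [h1, show z j = cfcₙ (gfn η) (y' j) from rfl, h2, h3]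
    -- orthogonality among the z's
    have hzz : ∀ j k, j ≠ k → z j * z k = 0 := by
      intro j k hjk
      have hpow : ∀ i : ℕ, aosPw (y' j) i * z k = 0 := by
        intro i
        induction i with
        | zero => rw [show aosPw (y' j) 0 = y' j from rfl]; exact hann k j hjk
        | succ m ihm =>
          rw [show aosPw (y' j) (m+1) = y' j * aosPw (y' j) m from rfl, mul_assoc, ihm,
            mul_zero]
      have := aos_engine0 (y' j) (z k) (hy'0 j) (gfn η) (gfn_cont hη) (gfn_zero hη) hpow
      exact this
    -- the new last element
    set bl : D := b (Fin.last n) with hbldef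
    have hbl0 : 0 ≤ bl := hb0 _
    have hbl1 : ‖bl‖ ≤ 1 := hb1 _
    have hblsa : IsSelfAdjoint bl := hbl0.isSelfAdjoint
    set x : D := CFC.sqrt bl with hxdef
    have hx0 : 0 ≤ x := CFC.sqrt_nonneg bl
    have hxsa : IsSelfAdjoint x := hx0.isSelfAdjoint
    have hxx : x * x = bl := CFC.sqrt_mul_sqrt_self bl hbl0
    set u : D := x - c * x with hudef
    have hustar : star u = x - x * c := by
      rw [hudef, star_sub, star_mul, hxsa.star_eq, hcsa.star_eq]
    set yl : D := u * star u with hyldef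
    have hyl0 : 0 ≤ yl := mul_star_self_nonneg u
    have hylsa : IsSelfAdjoint yl := hyl0.isSelfAdjoint
    have hyl_eq : yl = bl - bl * c - c * bl + c * (bl * c) := by
      rw [hyldef, hustar, hudef, ← hxx]
      noncomm_ring
    -- norm of yl
    have hc'0 : 0 ≤ c + c - c * c := by
      have he : cfcₙ (fun t => (mfn η t + mfn η t) - mfn η t * mfn η t) q
          = c + c - c * c := by
        rw [cfcₙ_sub (fun t => mfn η t + mfn η t) (fun t => mfn η t * mfn η t) q
            (by exact ((mfn_cont hη).add (mfn_cont hη)).continuousOn)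
            (by simp [mfn])
            (by exact ((mfn_cont hη).mul (mfn_cont hη)).continuousOn)
            (by simp [mfn]),
          cfcₙ_add (mfn η) (mfn η) q (mfn_cont hη).continuousOn (mfn_zero hη)
            (mfn_cont hη).continuousOn (mfn_zero hη),
          cfcₙ_mul (mfn η) (mfn η) q (mfn_cont hη).continuousOn (mfn_zero hη)
            (mfn_cont hη).continuousOn (mfn_zero hη)]
      rw [← he]
      refine cfcₙ_nonneg fun t ht => ?_
      have h1 := mfn_nonneg hη (aos_quasispec_Icc hq0 ht).1
      have h2 := mfn_le_one hη t
      nlinarith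
    have hsuu : star u * u = bl - x * (c + c - c * c) * x := by
      rw [hustar, hudef, ← hxx]
      noncomm_ring
    have hsuu_le : star u * u ≤ bl := by
      rw [hsuu]
      exact sub_le_self _ (hxsa.conjugate_nonneg hc'0)
    have hyln : ‖yl‖ ≤ 1 := by
      have h1 : ‖yl‖ = ‖star u * u‖ := by
        rw [hyldef, CStarRing.norm_self_mul_star, CStarRing.norm_star_mul_self]
      rw [h1]
      exact (CStarAlgebra.norm_le_norm_of_nonneg_of_le (star_mul_self_nonneg u) hsuu_le).trans hbl1
    -- orthogonality of yl with the z's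
    have hylz : ∀ j, yl * z j = 0 := by
      intro j
      have h1 : yl * z j = bl * z j - bl * (c * z j) - c * (bl * z j)
          + c * (bl * (c * z j)) := by
        rw [hyl_eq]; noncomm_ring
      rw [h1, hcz j]
      abel
    have hzyl : ∀ j, z j * yl = 0 := by
      intro j
      have h1 := congrArg star (hylz j)
      rwa [star_mul, (hzsa j).star_eq, hylsa.star_eq, star_zero] at h1
    -- norm estimate for bl * c
    have haux : bl * (c * c) * bl = (bl * c) * star (bl * c) := by
      rw [star_mul, hcsa.star_eq, hblsa.star_eq]
      noncomm_ring
    have hcc_le : c * c ≤ (η⁻¹ * η⁻¹) • (q * q) := by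
      have h1 : c * c = cfcₙ (fun t => mfn η t * mfn η t) q :=
        (cfcₙ_mul (mfn η) (mfn η) q (mfn_cont hη).continuousOn (mfn_zero hη)
          (mfn_cont hη).continuousOn (mfn_zero hη)).symm
      have h2 : cfcₙ (fun t => (η⁻¹ * η⁻¹) * (t * t)) q = (η⁻¹ * η⁻¹) • (q * q) := by
        rw [cfcₙ_const_mul (η⁻¹ * η⁻¹) (fun t => t * t) q (by fun_prop) (by simp)]
        congr 1
        rw [cfcₙ_mul (fun t => t) (fun t => t) q (by fun_prop) rfl (by fun_prop) rfl,
          cfcₙ_id' ℝ q]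
      rw [h1, ← h2]
      refine cfcₙ_mono (fun t ht => ?_)
        ((mfn_cont hη).mul (mfn_cont hη)).continuousOn (by fun_prop)
        (by simp [mfn]) (by simp)
      have h3 := mfn_nonneg hη (aos_quasispec_Icc hq0 ht).1
      have h4 := mfn_le hη (aos_quasispec_Icc hq0 ht).1
      have h5 : (0:ℝ) ≤ η⁻¹ * t := le_trans h3 h4
      nlinarith
    have hconj : bl * (c * c) * bl ≤ bl * ((η⁻¹ * η⁻¹) • (q * q)) * bl :=
      IsSelfAdjoint.conjugate_le_conjugate hcc_le hblsa
    have h0cc : 0 ≤ bl * (c * c) * bl := by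
      rw [haux]; exact mul_star_self_nonneg _
    have hqbl : ‖q * bl‖ = ‖bl * q‖ := by
      rw [← norm_star (q * bl), star_mul, hqsa.star_eq, hblsa.star_eq]
    have hRHS : ‖bl * ((η⁻¹ * η⁻¹) • (q * q)) * bl‖ ≤ (η⁻¹ * ‖bl * q‖)^2 := by
      have he : bl * ((η⁻¹ * η⁻¹) • (q * q)) * bl
          = (η⁻¹ * η⁻¹) • ((bl * q) * (q * bl)) := by
        rw [mul_smul_comm, smul_mul_assoc]
        congr 1
        noncomm_ring
      rw [he, norm_smul, Real.norm_eq_abs, abs_of_nonneg (by positivity)]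
      calc (η⁻¹ * η⁻¹) * ‖(bl * q) * (q * bl)‖
          ≤ (η⁻¹ * η⁻¹) * (‖bl * q‖ * ‖q * bl‖) :=
            mul_le_mul_of_nonneg_left (norm_mul_le _ _) (by positivity)
        _ = (η⁻¹ * ‖bl * q‖)^2 := by rw [hqbl]; ring
    have hbc : ‖bl * c‖ ≤ η⁻¹ * ‖bl * q‖ := by
      have hL : ‖bl * (c * c) * bl‖ = ‖bl * c‖ * ‖bl * c‖ := by
        rw [haux, CStarRing.norm_self_mul_star]
      have hchain := (CStarAlgebra.norm_le_norm_of_nonneg_of_le h0cc hconj).trans hRHS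
      rw [hL] at hchain
      nlinarith [norm_nonneg (bl * c), norm_nonneg (bl * q), inv_nonneg.mpr hη.le,
        mul_nonneg (inv_nonneg.mpr hη.le) (norm_nonneg (bl * q))]
    have hblq : ‖bl * q‖ ≤ (n : ℝ) * (min ρ' ε₀ + δ') := by
      rw [hqdef, Finset.mul_sum]
      calc ‖∑ j, bl * y' j‖ ≤ ∑ j, ‖bl * y' j‖ := norm_sum_le _ _
        _ ≤ ∑ _j : Fin n, (min ρ' ε₀ + δ') := by
            refine Finset.sum_le_sum fun j _ => ?_
            have he : bl * y' j = bl * b j.castSucc + bl * (y' j - b j.castSucc) := by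
              noncomm_ring
            rw [he]
            calc ‖bl * b j.castSucc + bl * (y' j - b j.castSucc)‖
                ≤ ‖bl * b j.castSucc‖ + ‖bl * (y' j - b j.castSucc)‖ := norm_add_le _ _
              _ ≤ min ρ' ε₀ + δ' := by
                  refine add_le_add ?_ ?_
                  · exact (hbρ (Fin.last n) j.castSucc (Fin.castSucc_lt_last j).ne').le
                  · calc ‖bl * (y' j - b j.castSucc)‖
                        ≤ ‖bl‖ * ‖y' j - b j.castSucc‖ := norm_mul_le _ _
                      _ ≤ 1 * δ' := by
                          refine mul_le_mul hbl1 (hy'close j).le (norm_nonneg _) zero_le_one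
                      _ = δ' := one_mul _
        _ = (n : ℝ) * (min ρ' ε₀ + δ') := by
            rw [Finset.sum_const, Finset.card_univ, Fintype.card_fin, nsmul_eq_mul]
    have hyldist : ‖yl - bl‖ < δ := by
      have h1 : yl - bl = c * (bl * c) - bl * c - c * bl := by
        rw [hyl_eq]; abel
      have hcbl : ‖c * bl‖ = ‖bl * c‖ := by
        rw [← norm_star (c * bl), star_mul, hcsa.star_eq, hblsa.star_eq]
      have h2 : ‖yl - bl‖ ≤ 3 * ‖bl * c‖ := by
        rw [h1]
        calc ‖c * (bl * c) - bl * c - c * bl‖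
            ≤ ‖c * (bl * c) - bl * c‖ + ‖c * bl‖ := norm_sub_le _ _
          _ ≤ ‖c * (bl * c)‖ + ‖bl * c‖ + ‖c * bl‖ := by
              gcongr; exact norm_sub_le _ _
          _ ≤ 1 * ‖bl * c‖ + ‖bl * c‖ + ‖bl * c‖ := by
              rw [hcbl]
              gcongr
              exact (norm_mul_le _ _).trans (by gcongr)
          _ = 3 * ‖bl * c‖ := by ring
      have h3 : ‖yl - bl‖ ≤ 3 * (η⁻¹ * ((n:ℝ) * (min ρ' ε₀ + δ'))) := by
        refine h2.trans ?_
        calc 3 * ‖bl * c‖ ≤ 3 * (η⁻¹ * ‖bl * q‖) :=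
              mul_le_mul_of_nonneg_left hbc (by norm_num)
          _ ≤ 3 * (η⁻¹ * ((n:ℝ) * (min ρ' ε₀ + δ'))) := by
              refine mul_le_mul_of_nonneg_left ?_ (by norm_num)
              exact mul_le_mul_of_nonneg_left hblq (inv_nonneg.mpr hη.le)
      refine lt_of_le_of_lt h3 ?_
      have hmin1 : min ρ' ε₀ ≤ ε₀ := min_le_right _ _
      have hmin2 : δ' ≤ ε₀ := min_le_right _ _
      have hηinv : η⁻¹ = 4/δ := by rw [hηdef, inv_div]
      have hN : (0:ℝ) ≤ (n:ℝ) := Nat.cast_nonneg n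
      have h26 : (0:ℝ) < 26 * ((n:ℝ) + 1) := by positivity
      have hstep : 3 * (η⁻¹ * ((n:ℝ) * (min ρ' ε₀ + δ')))
          ≤ 3 * ((4/δ) * ((n:ℝ) * (2 * ε₀))) := by
        rw [hηinv]
        refine mul_le_mul_of_nonneg_left ?_ (by norm_num)
        refine mul_le_mul_of_nonneg_left ?_ (by positivity)
        exact mul_le_mul_of_nonneg_left (by linarith) hN
      refine lt_of_le_of_lt hstep ?_
      have hkey : 3 * ((4/δ) * ((n:ℝ) * (2 * ε₀))) = (24 * (n:ℝ) / (26 * ((n:ℝ)+1))) * δ := by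
        rw [hε₀def]
        field_simp
        ring
      rw [hkey]
      have hcoef : 24 * (n:ℝ) / (26 * ((n:ℝ)+1)) < 1 := by
        rw [div_lt_one h26]
        linarith
      calc 24 * (n:ℝ) / (26 * ((n:ℝ)+1)) * δ < 1 * δ := mul_lt_mul_of_pos_right hcoef hδ
        _ = δ := one_mul δ
    -- assemble the new family
    have hδ'le : δ' ≤ δ/4 := min_le_left _ _
    refine ⟨Fin.snoc z yl, ?_, ?_, ?_, ?_⟩
    · intro j
      rcases Fin.eq_castSucc_or_eq_last j with ⟨i, rfl⟩ | rfl
      · simpa [Fin.snoc_castSucc] using hz0 i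
      · simpa [Fin.snoc_last] using hyl0
    · intro j
      rcases Fin.eq_castSucc_or_eq_last j with ⟨i, rfl⟩ | rfl
      · simpa [Fin.snoc_castSucc] using hz1 i
      · simpa [Fin.snoc_last] using hyln
    · intro j k hjk
      rcases Fin.eq_castSucc_or_eq_last j with ⟨i, rfl⟩ | rfl <;>
        rcases Fin.eq_castSucc_or_eq_last k with ⟨i', rfl⟩ | rfl
      · have hii' : i ≠ i' := fun h => hjk (by rw [h])
        simpa [Fin.snoc_castSucc] using hzz i i' hii'
      · simpa [Fin.snoc_castSucc, Fin.snoc_last] using hzyl i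
      · simpa [Fin.snoc_castSucc, Fin.snoc_last] using hylz i'
      · exact absurd rfl hjk
    · intro j
      rcases Fin.eq_castSucc_or_eq_last j with ⟨i, rfl⟩ | rfl
      · rw [Fin.snoc_castSucc]
        have h1 : z i - b i.castSucc = (z i - y' i) + (y' i - b i.castSucc) := by abel
        calc ‖z i - b i.castSucc‖ ≤ ‖z i - y' i‖ + ‖y' i - b i.castSucc‖ := by
              rw [h1]; exact norm_add_le _ _
          _ < η + δ' := add_lt_add_of_le_of_lt (hzy i) (hy'close i)
          _ < δ := by rw [hηdef]; linarith
      · rw [Fin.snoc_last]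
        exact hyldist

/-- Proposition 4.4: stability of finitely many almost-orthogonal positive contractions.
For every `n` and `δ > 0` there is `ρ > 0` such that in any C*-algebra `D`, positive
contractions `b₁, …, bₙ` with `‖bⱼ b_k‖ < ρ` (for `j ≠ k`) can be perturbed within `δ`
to exactly orthogonal positive contractions `y₁, …, yₙ`. -/
theorem almost_orthogonal_stability.{u} (n : ℕ) (hn : 0 < n) (δ : ℝ) (hδ : 0 < δ) :
    ∃ ρ : ℝ, 0 < ρ ∧
      ∀ (D : Type u) [NonUnitalCStarAlgebra D] [PartialOrder D] [StarOrderedRing D],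
        ∀ b : Fin n → D, (∀ j, 0 ≤ b j) → (∀ j, ‖b j‖ ≤ 1) →
          (∀ j k, j ≠ k → ‖b j * b k‖ < ρ) →
          ∃ y : Fin n → D, (∀ j, 0 ≤ y j) ∧ (∀ j, ‖y j‖ ≤ 1) ∧
            (∀ j k, j ≠ k → y j * y k = 0) ∧ (∀ j, ‖y j - b j‖ < δ) := by
  exact aos_main n δ hδ
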